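/- For all natural numbers k, l1, l2, l3 with l1 + l2 + l3 < k, the following inequality holds in the integers: k · 2^{k+1} ≤ 2^{l1+l2+l3} · ( (k − l3) · 2^{k+1−l2} − l1 · C(k+1−l2, ⌊(k+1−l2)/2⌋) ). -/

import Mathlib

lemma choose_le_two_pow' (n r : ℕ) : n.choose r ≤ 2 ^ n := by
  rcases le_or_gt r n with hr | hr
  · calc n.choose r ≤ ∑ m ∈ Finset.range (n + 1), n.choose m :=
        Finset.single_le_sum (f := fun m => n.choose m) (by intro i _; exact Nat.zero_le _)
          (Finset.mem_range.mpr (Nat.lt_succ_of_le hr))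
    _ = 2 ^ n := Nat.sum_range_choose n
  · rw [Nat.choose_eq_zero_of_lt hr]; exact Nat.zero_le _

theorem case_d_summand_nondecrease (k l1 l2 l3 : ℕ) (h : l1 + l2 + l3 < k) :
    (k : ℤ) * 2 ^ (k + 1) ≤
      2 ^ (l1 + l2 + l3) *
        (((k : ℤ) - l3) * 2 ^ (k + 1 - l2) -
          (l1 : ℤ) * (Nat.choose (k + 1 - l2) ((k + 1 - l2) / 2) : ℤ)) := by
  set n := k + 1 - l2 with hndef
  have hn : n + l2 = k + 1 := by omega
  have hC : (Nat.choose n (n / 2) : ℤ) ≤ 2 ^ n := by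
    exact_mod_cast choose_le_two_pow' n (n / 2)
  have ha : l1 + l3 < k := by omega
  have h2 : ((l1 + l3 : ℕ) : ℤ) < 2 ^ (l1 + l3) := by
    exact_mod_cast Nat.lt_two_pow_self (n := l1 + l3)
  have hkey : (k : ℤ) ≤ ((k : ℤ) - l3 - l1) * 2 ^ (l1 + l3) := by
    have hk : ((l1 + l3 : ℕ) : ℤ) < k := by exact_mod_cast ha
    push_cast at h2 hk ⊢
    nlinarith [mul_nonneg (by linarith : (0:ℤ) ≤ (k:ℤ) - l1 - l3 - 1)
        (by linarith : (0:ℤ) ≤ 2 ^ (l1 + l3) - (l1 + l3) - 1),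
      mul_nonneg (by positivity : (0:ℤ) ≤ (l1:ℤ) + l3)
        (by linarith : (0:ℤ) ≤ (k:ℤ) - l1 - l3 - 1)]
  have hpow : (2:ℤ) ^ (l1 + l2 + l3) * 2 ^ n = 2 ^ (l1 + l3) * 2 ^ (k + 1) := by
    rw [← pow_add, ← pow_add]; congr 1; omega
  have step1 : (2:ℤ) ^ (l1 + l2 + l3) * (((k:ℤ) - l3 - l1) * 2 ^ n) ≤
      2 ^ (l1 + l2 + l3) *
        (((k : ℤ) - l3) * 2 ^ n - (l1 : ℤ) * (Nat.choose n (n / 2) : ℤ)) := by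
    apply mul_le_mul_of_nonneg_left _ (by positivity)
    have : (l1 : ℤ) * (Nat.choose n (n / 2) : ℤ) ≤ (l1 : ℤ) * 2 ^ n :=
      mul_le_mul_of_nonneg_left hC (by positivity)
    nlinarith
  refine le_trans ?_ step1
  calc (k : ℤ) * 2 ^ (k + 1) ≤ ((k : ℤ) - l3 - l1) * 2 ^ (l1 + l3) * 2 ^ (k + 1) := by
        apply mul_le_mul_of_nonneg_right hkey (by positivity)
    _ = 2 ^ (l1 + l2 + l3) * (((k:ℤ) - l3 - l1) * 2 ^ n) := by
        rw [show ((k:ℤ) - l3 - l1) * 2 ^ (l1 + l3) * 2 ^ (k + 1) = ((k:ℤ) - l3 - l1) * (2 ^ (l1 + l3) * 2 ^ (k + 1)) from by ring, ← hpow]; ring
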